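/- Suppose that for all sufficiently large n, every strongly edge-colored graph G on n vertices with δ(G) ≥ n/2 either contains a rainbow Hamilton cycle or admits a partition V(G) = V1 ∪ V2 with |V1| ≤ |V2| such that G[V2] is ((|V2|−|V1|)/2)-regular and uses exactly |V2|−|V1|−1 colors. Then for all sufficiently large n, every strongly edge-colored graph G on n vertices with δ(G) ≥ (n−1)/2 either contains a rainbow Hamilton path or admits a partition V(G) = V1 ∪ V2 with |V1| ≤ |V2| such that G[V2] is ((|V2|−|V1|−1)/2)-regular and uses exactly |V2|−|V1|−2 colors. -/

import Mathlib

open SimpleGraph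

def StronglyEdgeColored {V C : Type*} (G : SimpleGraph V) (c : Sym2 V → C) : Prop :=
  ∀ a b x y : V, G.Adj a b → G.Adj x y → c s(a, b) = c s(x, y) →
    s(a, b) = s(x, y) ∨
      (a ≠ x ∧ a ≠ y ∧ b ≠ x ∧ b ≠ y ∧
        ¬G.Adj a x ∧ ¬G.Adj a y ∧ ¬G.Adj b x ∧ ¬G.Adj b y)

/-- `G` has a Hamilton cycle all of whose edges receive distinct colors. -/
def HasRainbowHamiltonCycle {V C : Type*} [DecidableEq V] (G : SimpleGraph V) (c : Sym2 V → C) : Prop :=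
  ∃ (v : V) (p : G.Walk v v), p.IsHamiltonianCycle ∧ (p.edges.map c).Nodup

/-- `G` has a Hamilton path all of whose edges receive distinct colors. -/
def HasRainbowHamiltonPath {V C : Type*} [DecidableEq V] (G : SimpleGraph V) (c : Sym2 V → C) : Prop :=
  ∃ (u v : V) (p : G.Walk u v), p.IsHamiltonian ∧ (p.edges.map c).Nodup

/-- The set of colors used on edges of `G` lying inside `V2`. -/
def ColorsInside {V C : Type*} (G : SimpleGraph V) (c : Sym2 V → C) (V2 : Finset V) :
    Set C :=
  c '' {e ∈ G.edgeSet | ∀ x ∈ e, x ∈ V2}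



variable {V : Type} 

def apexGraph (G : SimpleGraph V) : SimpleGraph (Option V) where
  Adj x y := match x, y with
    | some a, some b => G.Adj a b
    | some _, none => True
    | none, some _ => True
    | none, none => False
  symm := by
    constructor; rintro (_ | a) (_ | b) h
    · exact h
    · trivial
    · trivial
    · exact G.symm.symm _ _ h
  loopless := by
    constructor; rintro (_ | a) h
    · exact h
    · exact G.loopless.irrefl a h

instance (G : SimpleGraph V) [DecidableRel G.Adj] : DecidableRel (apexGraph G).Adj := fun x y =>
  match x, y with
  | some a, some b => (inferInstance : Decidable (G.Adj a b))
  | some _, none => Decidable.isTrue trivial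
  | none, some _ => Decidable.isTrue trivial
  | none, none => Decidable.isFalse id

@[simp] lemma apexGraph_adj_ss {G : SimpleGraph V} {a b : V} :
    (apexGraph G).Adj (some a) (some b) ↔ G.Adj a b := Iff.rfl
@[simp] lemma apexGraph_adj_sn {G : SimpleGraph V} {a : V} :
    (apexGraph G).Adj (some a) none := trivial
@[simp] lemma apexGraph_adj_ns {G : SimpleGraph V} {b : V} :
    (apexGraph G).Adj none (some b) := trivial
@[simp] lemma apexGraph_adj_nn {G : SimpleGraph V} :
    ¬ (apexGraph G).Adj none none := id

def apexColor {C : Type} (c : Sym2 V → C) : Sym2 (Option V) → C ⊕ Option V :=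
  Sym2.lift ⟨fun x y => match x, y with
    | some a, some b => Sum.inl (c s(a, b))
    | some a, none => Sum.inr (some a)
    | none, some b => Sum.inr (some b)
    | none, none => Sum.inr none,
   by
    rintro (_ | a) (_ | b)
    · rfl
    · rfl
    · rfl
    · exact congrArg Sum.inl (congrArg c (Sym2.eq_swap))⟩

@[simp] lemma apexColor_ss {C : Type} (c : Sym2 V → C) (a b : V) :
    apexColor c s(some a, some b) = Sum.inl (c s(a, b)) := rfl
@[simp] lemma apexColor_sn {C : Type} (c : Sym2 V → C) (a : V) :
    apexColor c s(some a, none) = Sum.inr (some a) := rfl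
@[simp] lemma apexColor_ns {C : Type} (c : Sym2 V → C) (b : V) :
    apexColor c s(none, some b) = Sum.inr (some b) := rfl

lemma apexGraph_degree_some {G : SimpleGraph V} [Fintype V] [DecidableEq V]
    [DecidableRel G.Adj] (x : V) :
    (apexGraph G).degree (some x) = G.degree x + 1 := by
  classical
  have h : (apexGraph G).neighborFinset (some x)
      = insert none ((G.neighborFinset x).map ⟨some, Option.some_injective V⟩) := by
    ext y
    cases y with
    | none => simp
    | some b => simp
  rw [degree, h, Finset.card_insert_of_notMem (by simp), Finset.card_map, degree]

lemma apexGraph_degree_none {G : SimpleGraph V} [Fintype V] [DecidableEq V]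
    [DecidableRel G.Adj] :
    (apexGraph G).degree none = Fintype.card V := by
  classical
  have h : (apexGraph G).neighborFinset none
      = Finset.univ.map ⟨some, Option.some_injective V⟩ := by
    ext y
    cases y with
    | none => simp
    | some b => simp
  rw [degree, h, Finset.card_map, Fintype.card]

lemma apexColor_map {C : Type} (c : Sym2 V → C) (e : Sym2 V) :
    apexColor c (e.map some) = Sum.inl (c e) := by
  induction e using Sym2.ind with
  | _ a b => rfl

lemma stronglyEdgeColored_apex {C : Type} {G : SimpleGraph V} {c : Sym2 V → C}
    (hG : StronglyEdgeColored G c) : StronglyEdgeColored (apexGraph G) (apexColor c) := by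
  rintro (_ | a) (_ | b) (_ | x) (_ | y) hab hxy hc <;>
    simp only [apexColor_ss, apexColor_sn, apexColor_ns, apexGraph_adj_nn] at hab hxy hc ⊢
  -- remaining: both edges have explicit shapes
  · -- none-some vs none-some : colors inr (some b) = inr (some y)
    left; obtain rfl : b = y := by simpa using hc
    rfl
  · -- none-some vs some-none
    left; obtain rfl : b = x := by simpa using hc
    rw [Sym2.eq_swap]
  · -- none-some vs some-some : inr = inl impossible
    simp at hc
  · -- some-none vs none-some
    left; obtain rfl : a = y := by simpa using hc
    rw [Sym2.eq_swap]
  · -- some-none vs some-none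
    left; obtain rfl : a = x := by simpa using hc
    rfl
  · -- some-none vs some-some
    simp at hc
  · -- some-some vs none-some
    simp at hc
  · -- some-some vs some-none
    simp at hc
  · -- some-some vs some-some
    obtain heq | ⟨h1, h2, h3, h4, h5, h6, h7, h8⟩ := hG a b x y hab hxy (by simpa using hc)
    · left; have := congrArg (Sym2.map some) heq; simpa using this
    · right
      refine ⟨by simpa using h1, by simpa using h2, by simpa using h3, by simpa using h4,
        by simpa using h5, by simpa using h6, by simpa using h7, by simpa using h8⟩

lemma liftWalk {G : SimpleGraph V} {x z : Option V} (p : (apexGraph G).Walk x z)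
    (hn : none ∉ p.support) :
    ∃ (a b : V) (q : G.Walk a b), x = some a ∧ z = some b ∧
      p.support = q.support.map some ∧ p.edges = q.edges.map (Sym2.map some) := by
  induction p with
  | nil =>
    rename_i u
    match u, hn with
    | some a, hn => exact ⟨a, a, Walk.nil, rfl, rfl, rfl, rfl⟩
    | none, hn => simp at hn
  | cons h p ih =>
    rename_i u w _
    rw [Walk.support_cons, List.mem_cons] at hn
    push_neg at hn
    obtain ⟨hu, hn⟩ := hn
    obtain ⟨a', b, q, hy, hz, hs, he⟩ := ih hn
    subst hy hz
    match u, hu with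
    | some a, _ =>
      refine ⟨a, b, Walk.cons (apexGraph_adj_ss.1 h) q, rfl, rfl, ?_, ?_⟩
      · rw [Walk.support_cons, hs, Walk.support_cons, List.map_cons]
      · rw [Walk.edges_cons, he, Walk.edges_cons, List.map_cons, Sym2.map_pair_eq]

lemma rainbow_path_of_cycle [Fintype V] [DecidableEq V] {C : Type} {G : SimpleGraph V}
    {c : Sym2 V → C}
    (hcard : 2 ≤ Fintype.card (Option V))
    (h : HasRainbowHamiltonCycle (apexGraph G) (apexColor c)) :
    HasRainbowHamiltonPath G c := by
  classical
  obtain ⟨v, p, hp, hrb⟩ := h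
  have hmem : none ∈ p.support := hp.mem_support none
  set q : (apexGraph G).Walk none none := p.rotate none hmem with hqdef
  have hq : q.IsHamiltonianCycle := by
    rw [Walk.isHamiltonianCycle_iff_isCycle_and_support_count_tail_eq_one]
    refine ⟨hp.isCycle.rotate hmem, fun a => ?_⟩
    have hperm := (Walk.support_rotate p none hmem).perm
    rw [@List.Perm.count_eq _ instBEqOfDecidableEq _ _ hperm]
    exact (Walk.isHamiltonianCycle_iff_isCycle_and_support_count_tail_eq_one.1 hp).2 a
  have hqrb : (q.edges.map (apexColor c)).Nodup :=
    (((Walk.rotate_edges p none hmem).perm).map (apexColor c)).nodup_iff.2 hrb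
  have hqnil : ¬ q.Nil := hq.isCycle.not_nil
  -- tail of q is a hamiltonian path from q.getVert 1 to none
  have ht : q.tail.IsHamiltonian := hq.isHamiltonian_tail
  have hqedges : q.edges = s(none, q.getVert 1) :: q.tail.edges := by
    conv_lhs => rw [← Walk.cons_tail_eq q hqnil]
    rw [Walk.edges_cons]
  have htrb : (q.tail.edges.map (apexColor c)).Nodup := by
    rw [hqedges] at hqrb
    exact (List.nodup_cons.1 hqrb).2
  -- reverse it
  set r : (apexGraph G).Walk none (q.getVert 1) := q.tail.reverse with hrdef
  have hrham : r.IsHamiltonian := fun a => by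
    have : r.support.Perm q.tail.support := by
      rw [hrdef, Walk.support_reverse]; exact q.tail.support.reverse_perm
    rw [@List.Perm.count_eq _ instBEqOfDecidableEq _ _ this]; exact ht a
  have hrrb : (r.edges.map (apexColor c)).Nodup := by
    rw [hrdef, Walk.edges_reverse, List.map_reverse, List.nodup_reverse]
    exact htrb
  have hrnil : ¬ r.Nil := by
    intro hnil
    have h1 : r.length = Fintype.card (Option V) - 1 := hrham.length_eq
    have h2 : r.length = 0 := Walk.nil_iff_length_eq.1 hnil
    omega
  have hrsupp : r.support = none :: r.tail.support := (Walk.cons_support_tail hrnil).symm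
  have hrnd : r.support.Nodup := by
    rw [hrdef, Walk.support_reverse, List.nodup_reverse, Walk.support_tail_of_not_nil q hqnil]
    exact hq.isCycle.support_nodup
  have hnotail : none ∉ r.tail.support := by
    rw [hrsupp, List.nodup_cons] at hrnd
    exact hrnd.1
  have hredges : r.edges = s(none, r.getVert 1) :: r.tail.edges := by
    conv_lhs => rw [← Walk.cons_tail_eq r hrnil]
    rw [Walk.edges_cons]
  obtain ⟨a, b, q0, ha, hb, hs0, he0⟩ := liftWalk r.tail hnotail
  refine ⟨a, b, q0, fun w => ?_, ?_⟩
  · -- hamiltonicity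
    have h1 := hrham (some w)
    rw [hrsupp, hs0] at h1
    have h2 := @List.count_map_of_injective V (Option V) _ _ instBEqOfDecidableEq _ q0.support some
      (Option.some_injective V) w
    rw [← h2]
    simpa using h1
  · -- rainbow
    rw [hredges] at hrrb
    have h2 : (r.tail.edges.map (apexColor c)).Nodup := (List.nodup_cons.1 hrrb).2
    rw [he0, List.map_map] at h2
    have h3 : (apexColor c) ∘ (Sym2.map some) = Sum.inl ∘ c := by
      funext e; exact apexColor_map c e
    rw [h3, ← List.map_map] at h2
    exact h2.of_map Sum.inl

lemma colorsInside_apex {C : Type} [DecidableEq V] (G : SimpleGraph V) (c : Sym2 V → C)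
    (V2' : Finset (Option V)) (hnone : none ∉ V2')
    (V2 : Finset V) (hV2 : ∀ a : V, a ∈ V2 ↔ some a ∈ V2') :
    ColorsInside (apexGraph G) (apexColor c) V2' = Sum.inl '' ColorsInside G c V2 := by
  ext d
  constructor
  · rintro ⟨e, ⟨he, hmem⟩, rfl⟩
    induction e using Sym2.ind with
    | _ x y =>
      match x, y, he, hmem with
      | some a, some b, he, hmem =>
        refine ⟨c s(a, b), ⟨s(a, b), ⟨he, ?_⟩, rfl⟩, rfl⟩
        intro z hz
        rw [Sym2.mem_iff] at hz
        rcases hz with rfl | rfl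
        · exact (hV2 z).2 (hmem (some z) (by simp))
        · exact (hV2 z).2 (hmem (some z) (by simp))
      | some a, none, he, hmem => exact absurd (hmem none (by simp)) hnone
      | none, some b, he, hmem => exact absurd (hmem none (by simp)) hnone
      | none, none, he, hmem => exact absurd he (by simp)
  · rintro ⟨d', ⟨e, ⟨he, hmem⟩, rfl⟩, rfl⟩
    induction e using Sym2.ind with
    | _ a b =>
      refine ⟨s(some a, some b), ⟨he, ?_⟩, rfl⟩
      intro z hz
      rw [Sym2.mem_iff] at hz
      rcases hz with rfl | rfl
      · exact (hV2 a).1 (hmem a (by simp))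
      · exact (hV2 b).1 (hmem b (by simp))


theorem stmt_5
    (hyp : ∃ n0 : ℕ, ∀ (V C : Type) [Fintype V] [DecidableEq V]
      (G : SimpleGraph V) [DecidableRel G.Adj] (c : Sym2 V → C),
      n0 ≤ Fintype.card V → StronglyEdgeColored G c →
      (∀ v : V, Fintype.card V ≤ 2 * G.degree v) →
      (HasRainbowHamiltonCycle G c ∨
        ∃ V1 V2 : Finset V, Disjoint V1 V2 ∧ V1 ∪ V2 = Finset.univ ∧
          V1.card ≤ V2.card ∧
          (∀ v ∈ V2, 2 * ((V2.filter (G.Adj v)).card : ℤ) = (V2.card : ℤ) - V1.card) ∧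
          ((ColorsInside G c V2).ncard : ℤ) = (V2.card : ℤ) - V1.card - 1)) :
    ∃ n0 : ℕ, ∀ (V C : Type) [Fintype V] [DecidableEq V]
      (G : SimpleGraph V) [DecidableRel G.Adj] (c : Sym2 V → C),
      n0 ≤ Fintype.card V → StronglyEdgeColored G c →
      (∀ v : V, (Fintype.card V : ℤ) - 1 ≤ 2 * (G.degree v : ℤ)) →
      (HasRainbowHamiltonPath G c ∨
        ∃ V1 V2 : Finset V, Disjoint V1 V2 ∧ V1 ∪ V2 = Finset.univ ∧
          V1.card ≤ V2.card ∧
          (∀ v ∈ V2, 2 * ((V2.filter (G.Adj v)).card : ℤ) = (V2.card : ℤ) - V1.card - 1) ∧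
          ((ColorsInside G c V2).ncard : ℤ) = (V2.card : ℤ) - V1.card - 2) := by
  classical
  obtain ⟨n0, hn0⟩ := hyp
  refine ⟨max n0 5, ?_⟩
  intro V C _ _ G _ c hcard hsec hdeg
  set n := Fintype.card V with hn
  have hn5 : 5 ≤ n := le_trans (le_max_right _ _) hcard
  have hcardO : Fintype.card (Option V) = n + 1 := by simp [Fintype.card_option, hn]
  have hdeg' : ∀ v : Option V, Fintype.card (Option V) ≤ 2 * (apexGraph G).degree v := by
    intro v
    cases v with
    | none =>
      rw [hcardO, apexGraph_degree_none]
      omega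
    | some x =>
      rw [hcardO, apexGraph_degree_some]
      have := hdeg x
      have : (n : ℤ) - 1 ≤ 2 * (G.degree x : ℤ) := this
      omega
  have hmain := hn0 (Option V) (C ⊕ Option V) (apexGraph G) (apexColor c)
    (by rw [hcardO]; omega) (stronglyEdgeColored_apex hsec) hdeg'
  rcases hmain with hcyc | ⟨V1', V2', hdisj, huniv, hle, hreg, hcol⟩
  · left
    exact rainbow_path_of_cycle (by omega) hcyc
  · right
    -- first, none ∈ V1'
    have hnonemem : (none : Option V) ∈ V1' ∪ V2' := by rw [huniv]; exact Finset.mem_univ _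
    have hcards : V1'.card + V2'.card = n + 1 := by
      rw [← Finset.card_union_of_disjoint hdisj, huniv, ← hcardO]
      exact Finset.card_univ
    have hnone1 : none ∈ V1' := by
      rcases Finset.mem_union.1 hnonemem with h1 | h2
      · exact h1
      · exfalso
        have hfil : V2'.filter ((apexGraph G).Adj none) = V2'.erase none := by
          ext y
          cases y with
          | none => simp
          | some b => simp [Finset.mem_erase, Finset.mem_filter, and_comm]
        have := hreg none h2
        rw [hfil, Finset.card_erase_of_mem h2] at this
        have h1le : 1 ≤ V2'.card := Finset.card_pos.2 ⟨none, h2⟩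
        have : 2 * ((V2'.card : ℤ) - 1) = (V2'.card : ℤ) - V1'.card := by
          rw [← this]; congr 1
          have := Nat.cast_sub h1le (R := ℤ)
          push_cast [this]
          ring
        omega
    have hnone2 : none ∉ V2' := fun h => (Finset.disjoint_left.1 hdisj hnone1) h
    set V1 : Finset V := Finset.univ.filter (fun v => some v ∈ V1') with hV1def
    set V2 : Finset V := Finset.univ.filter (fun v => some v ∈ V2') with hV2def
    have hmem1 : ∀ a : V, a ∈ V1 ↔ some a ∈ V1' := by intro a; simp [hV1def]
    have hmem2 : ∀ a : V, a ∈ V2 ↔ some a ∈ V2' := by intro a; simp [hV2def]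
    have hV2eq : V2' = V2.map ⟨some, Option.some_injective V⟩ := by
      ext y
      cases y with
      | none => simp [hnone2]
      | some a => simp [hmem2]
    have hV1eq : V1' = insert none (V1.map ⟨some, Option.some_injective V⟩) := by
      ext y
      cases y with
      | none => simp [hnone1]
      | some a => simp [hmem1]
    have hc2 : V2'.card = V2.card := by rw [hV2eq, Finset.card_map]
    have hc1 : V1'.card = V1.card + 1 := by
      rw [hV1eq, Finset.card_insert_of_notMem (by simp), Finset.card_map]
    refine ⟨V1, V2, ?_, ?_, ?_, ?_, ?_⟩
    · rw [Finset.disjoint_left]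
      intro a ha1 ha2
      exact Finset.disjoint_left.1 hdisj ((hmem1 a).1 ha1) ((hmem2 a).1 ha2)
    · ext a
      have : some a ∈ V1' ∪ V2' := by rw [huniv]; exact Finset.mem_univ _
      rcases Finset.mem_union.1 this with h | h
      · simp [Finset.mem_union, (hmem1 a).2 h]
      · simp [Finset.mem_union, (hmem2 a).2 h]
    · omega
    · intro v hv
      have hv' : some v ∈ V2' := (hmem2 v).1 hv
      have := hreg (some v) hv'
      have hfil : V2'.filter ((apexGraph G).Adj (some v)) =
          (V2.filter (G.Adj v)).map ⟨some, Option.some_injective V⟩ := by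
        ext y
        cases y with
        | none => simp [hnone2]
        | some u => simp [hmem2, and_comm]
      rw [hfil, Finset.card_map] at this
      rw [this, hc2, hc1]
      push_cast
      ring
    · have hcolset := colorsInside_apex G c V2' hnone2 V2 hmem2
      rw [hcolset, Set.ncard_image_of_injective _ Sum.inl_injective] at hcol
      rw [hcol, hc2, hc1]
      push_cast
      ring
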